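/- For the 1D single-component Euler equations with stiffened EOS, the entropy potential flux ψ = φ·v equals V^T F − q, where F = (ρ₁v, ρ₁v² + p, (E+p)v)^T with p = ρ₁R₁T − p_{∞,1}, q = −ρ₁S₁v, and V, φ, E, S₁ are as in the stiffened-EOS entropy framework. -/

import Mathlib

/-- Entropy potential flux identity `ψ = φ·v = Vᵀ F − q` for the 1D
single-component Euler equations with the stiffened EOS. -/
theorem entropy_potential_flux_identity_1d (cv Γ pinf ρ T v : ℝ)
    (hcv : 0 < cv) (hΓ : 1 < Γ) (hρ : 0 < ρ) (hT : 0 < T) :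
    let R := cv * (Γ - 1)
    let S := cv * Real.log T - R * Real.log ρ
    let p := ρ * R * T - pinf
    let E := cv * ρ * T + pinf + ρ * v ^ 2 / 2
    let q := -(ρ * S) * v
    let φ := R * ρ - pinf / T
    -- V · F − q = ψ = φ v
    ((-S - v ^ 2 / (2 * T) + cv * Γ) * (ρ * v) + (v / T) * (ρ * v ^ 2 + p)
        + (-(1 / T)) * ((E + p) * v)) - q = φ * v := by
  intro R S p E q φ
  field_simp [hT.ne', mul_comm, mul_assoc, mul_left_comm]
  linear_combination (2*v*pinf) * mul_inv_cancel₀ hT.ne'
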